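/- Let p ∈ (0, 1/2] and let H, G be as follows: H(x,y) = p·x·log_p(x) + (1-p)·y·log_p(y) + p·y - p·x and G(x,y) = (p·x + (1-p)·y)·log_p(p·x + (1-p)·y), with 0·log_p(0) = 0. Then for all 0 ≤ x ≤ y ≤ 1, H(x,y) - G(x,y) ≥ (1-p)·(y - x)·log_p( (1-p)·y / (p·x + (1-p)·y) ) (where the right-hand side is interpreted as 0 when y = 0). -/

import Mathlib

/-- Key scalar inequality: `p log p ≤ (1-p) log (1-p)` for `0 < p ≤ 1/2`. -/
lemma plogp_le (p : ℝ) (hp : 0 < p) (hp2 : p ≤ 1/2) :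
    p * Real.log p ≤ (1 - p) * Real.log (1 - p) := by
  have hq : (0:ℝ) < 1 - p := by linarith
  -- log(p/(1-p)) ≤ p/(1-p) - 1
  have h1 : Real.log p - Real.log (1 - p) ≤ p / (1 - p) - 1 := by
    have := Real.log_le_sub_one_of_pos (show (0:ℝ) < p / (1 - p) by positivity)
    rwa [Real.log_div hp.ne' hq.ne'] at this
  -- -log(1-p) ≤ p/(1-p)
  have h2 : -Real.log (1 - p) ≤ p / (1 - p) := by
    have := Real.log_le_sub_one_of_pos (show (0:ℝ) < (1 - p)⁻¹ by positivity)
    rw [Real.log_inv] at this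
    have : -Real.log (1 - p) ≤ (1 - p)⁻¹ - 1 := this
    have heq : (1 - p)⁻¹ - 1 = p / (1 - p) := by field_simp; ring
    linarith [this, heq ▸ this]
  have e1 : p * (Real.log p - Real.log (1 - p)) ≤ p * (p / (1 - p) - 1) :=
    mul_le_mul_of_nonneg_left h1 hp.le
  have e2 : (1 - 2*p) * -Real.log (1 - p) ≤ (1 - 2*p) * (p / (1 - p)) :=
    mul_le_mul_of_nonneg_left h2 (by linarith)
  have hfe : p * (p / (1 - p) - 1) + (1 - 2*p) * (p / (1 - p)) = 0 := by
    field_simp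
    ring
  nlinarith [e1, e2]

theorem H_sub_G_lower (p : ℝ) (hp : 0 < p) (hp2 : p ≤ 1/2)
    (H G : ℝ → ℝ → ℝ)
    (hH : ∀ x y, H x y = p * x * (Real.log x / Real.log p)
      + (1 - p) * y * (Real.log y / Real.log p) + p * y - p * x)
    (hG : ∀ x y, G x y = (p * x + (1 - p) * y) *
      (Real.log (p * x + (1 - p) * y) / Real.log p))
    (x y : ℝ) (hx : 0 ≤ x) (hxy : x ≤ y) (hy1 : y ≤ 1) :
    H x y - G x y ≥ (1 - p) * (y - x) *
      (Real.log ((1 - p) * y / (p * x + (1 - p) * y)) / Real.log p) := by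
  have hq : (0:ℝ) < 1 - p := by linarith
  have hL : Real.log p < 0 := Real.log_neg hp (by linarith)
  rcases eq_or_lt_of_le (hx.trans hxy) with hy | hy
  · -- y = 0, hence x = 0 : everything vanishes
    have hx0 : x = 0 := le_antisymm (hxy.trans hy.symm.le) hx
    rw [hH, hG, ← hy, hx0]
    simp
  · -- y > 0
    have hs : 0 < p * x + (1 - p) * y := by nlinarith
    set s := p * x + (1 - p) * y with hsdef
    have hlog : Real.log ((1 - p) * y / s) =
        Real.log (1 - p) + Real.log y - Real.log s := by
      rw [Real.log_div (by positivity) hs.ne', Real.log_mul hq.ne' hy.ne']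
    -- the numerator after multiplying the whole inequality by log p
    set E : ℝ := p * x * Real.log x + (1 - p) * y * Real.log y
      + (p * y - p * x) * Real.log p - s * Real.log s
      - (1 - p) * (y - x) * Real.log ((1 - p) * y / s) with hEdef
    have hE : E ≤ 0 := by
      have hEeq : E = x * (p * Real.log x + (1 - p) * Real.log y - Real.log s)
          + (y - x) * (p * Real.log p - (1 - p) * Real.log (1 - p)) := by
        rw [hEdef, hlog, hsdef]; ring
      have t1 : x * (p * Real.log x + (1 - p) * Real.log y - Real.log s) ≤ 0 := by
        rcases eq_or_lt_of_le hx with hx0 | hx0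
        · rw [← hx0]; simp
        · apply mul_nonpos_of_nonneg_of_nonpos hx
          have hgm : x ^ p * y ^ (1 - p) ≤ p * x + (1 - p) * y :=
            Real.geom_mean_le_arith_mean2_weighted hp.le hq.le hx0.le hy.le (by ring)
          have hlog2 : Real.log (x ^ p * y ^ (1 - p)) ≤ Real.log s :=
            Real.log_le_log (by positivity) hgm
          rw [Real.log_mul (by positivity) (by positivity),
            Real.log_rpow hx0, Real.log_rpow hy] at hlog2
          linarith
      have t2 : (y - x) * (p * Real.log p - (1 - p) * Real.log (1 - p)) ≤ 0 :=
        mul_nonpos_of_nonneg_of_nonpos (by linarith)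
          (by linarith [plogp_le p hp hp2])
      linarith [hEeq ▸ (add_nonpos t1 t2 : _)]
    have hkey : H x y - G x y - (1 - p) * (y - x) *
        (Real.log ((1 - p) * y / s) / Real.log p) = E / Real.log p := by
      rw [hH, hG, hEdef]
      generalize Real.log x = lx
      generalize Real.log y = ly
      generalize Real.log ((1 - p) * y / s) = lr
      generalize Real.log s = ls
      field_simp [hL.ne]
      ring
    have : 0 ≤ E / Real.log p := div_nonneg_iff.mpr (Or.inr ⟨hE, hL.le⟩)
    rw [ge_iff_le, ← sub_nonneg, hsdef] at *
    linarith [hkey ▸ this]
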